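/- Let X be a Banach space, k ∈ ℕ, and (x_s)_{s∈[ℕ]^k} a bounded k-sequence in X (i.e. there is C > 0 with ‖x_s‖ ≤ C for all s ∈ [ℕ]^k). Then there exist an infinite subset M of ℕ, a seminorm ‖·‖_* on the vector space of finitely supported real sequences under which the unit vector sequence (e_n)_n is spreading, and a null sequence (δ_n)_n of positive reals, such that (x_s)_{s∈[M]^k} generates (e_n)_n as a k-spreading model with respect to (δ_n)_n. -/

import Mathlib

/-- `s : Fin k → ℕ` is the increasing enumeration of a `k`-element subset of `M`. -/
def IsEnum (M : Set ℕ) {k : ℕ} (s : Fin k → ℕ) : Prop :=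
  StrictMono s ∧ ∀ i, s i ∈ M

/-- `(p j)_{j=1,…,l}` is a plegma family in `[M]^k`. -/
def IsPlegma (M : Set ℕ) {k l : ℕ} (p : Fin l → Fin k → ℕ) : Prop :=
  (∀ j, IsEnum M (p j)) ∧
  (∀ i : Fin k, StrictMono fun j : Fin l => p j i) ∧
  (∀ (i : Fin k) (hi : (i : ℕ) + 1 < k) (j j' : Fin l), p j i < p j' ⟨(i : ℕ) + 1, hi⟩)
/-- A null sequence of positive reals. -/
def IsNullPos (δ : ℕ → ℝ) : Prop :=
  (∀ n, 0 < δ n) ∧ Filter.Tendsto δ Filter.atTop (nhds 0)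

/-- The sequence `(e n)` is spreading with respect to the seminorm `ρ`:
`ρ (∑ a_i • e_i) = ρ (∑ a_i • e_{k_i})` for all strictly increasing `(k_i)`. -/
def IsSpreadingWith {E : Type*} [AddCommGroup E] [Module ℝ E]
    (ρ : Seminorm ℝ E) (e : ℕ → E) : Prop :=
  ∀ (n : ℕ) (a : Fin n → ℝ) (f : Fin n → ℕ), StrictMono f →
    ρ (∑ i, a i • e (i : ℕ)) = ρ (∑ i, a i • e (f i))

/-- The `k`-subsequence `(x_s)_{s ∈ [M]^k}` generates `(e n)` (in the seminormed space
`(E, ρ)`) as a `k`-spreading model with respect to the null sequence `δ`: for all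
`m ≤ l` (0-indexed), every plegma family `(p j)_{j=0}^{m}` in `[M]^k` whose first (hence
every) entry is `≥ M l`, and all coefficients in `[-1,1]`,
`| ‖∑ a_j • x_{p j}‖ - ρ (∑ a_j • e_j) | ≤ δ l`. The infinite set `M` is represented by
its increasing enumeration. -/
def Generates {X : Type*} [SeminormedAddCommGroup X] [NormedSpace ℝ X]
    {E : Type*} [AddCommGroup E] [Module ℝ E] (ρ : Seminorm ℝ E)
    {k : ℕ} (x : (Fin k → ℕ) → X) (M : ℕ → ℕ) (e : ℕ → E) (δ : ℕ → ℝ) : Prop :=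
  ∀ m l : ℕ, m ≤ l → ∀ p : Fin (m + 1) → Fin k → ℕ,
    IsPlegma (Set.range M) p →
    (∀ (j : Fin (m + 1)) (i : Fin k), M l ≤ p j i) →
    ∀ a : Fin (m + 1) → ℝ, (∀ j, a j ∈ Set.Icc (-1 : ℝ) 1) →
      |‖∑ j, a j • x (p j)‖ - ρ (∑ j, a j • e (j : ℕ))| ≤ δ l


open Filter Topology

section Ramsey

/-- Factor a strictly monotone tuple through a strictly monotone map containing its range. -/
lemma exists_factor {n : ℕ} {w : ℕ → ℕ} (hw : StrictMono w) (v : Fin n → ℕ)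
    (hv : StrictMono v) (hr : ∀ j, v j ∈ Set.range w) :
    ∃ t : Fin n → ℕ, StrictMono t ∧ v = w ∘ t := by
  choose t ht using hr
  refine ⟨t, fun i j hij => hw.lt_iff_lt.mp ?_, funext fun j => (ht j).symm⟩
  rw [ht i, ht j]; exact hv hij

/-- Infinite Ramsey theorem, finitely many colors, tuples version. -/
theorem ramseyMono : ∀ (n : ℕ) {κ : Type} [Finite κ] (c : (Fin n → ℕ) → κ),
    ∃ f : ℕ → ℕ, StrictMono f ∧ ∃ a, ∀ t : Fin n → ℕ, StrictMono t → c (f ∘ t) = a := by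
  intro n
  induction n with
  | zero =>
    intro κ _ c
    refine ⟨id, strictMono_id, c (Fin.elim0), fun t _ => ?_⟩
    congr 1; exact funext fun i => i.elim0
  | succ n ih =>
    intro κ _ c
    have step : ∀ g : {h : ℕ → ℕ // StrictMono h},
        ∃ q : {h : ℕ → ℕ // StrictMono h} × κ,
          (∀ m, q.1.1 m ∈ Set.range g.1 ∧ g.1 0 < q.1.1 m) ∧
          ∀ s : Fin n → ℕ, StrictMono s → c (Fin.cons (g.1 0) (q.1.1 ∘ s)) = q.2 := by
      rintro ⟨g, hg⟩
      obtain ⟨f', hf', a', ha'⟩ := ih (fun s : Fin n → ℕ => c (Fin.cons (g 0) (g ∘ (· + 1) ∘ s)))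
      have hsucc : StrictMono (fun z : ℕ => z + 1) := fun _ _ h => Nat.add_lt_add_right h 1
      refine ⟨⟨⟨g ∘ ((fun z : ℕ => z + 1) ∘ f'), hg.comp (hsucc.comp hf')⟩, a'⟩,
        fun m => ⟨⟨f' m + 1, rfl⟩, hg (Nat.succ_pos _)⟩, fun s hs => ?_⟩
      exact ha' s hs
    classical
    let next : {h : ℕ → ℕ // StrictMono h} → {h : ℕ → ℕ // StrictMono h} × κ :=
      fun g => (step g).choose
    let G : ℕ → {h : ℕ → ℕ // StrictMono h} :=
      fun i => Nat.rec ⟨id, strictMono_id⟩ (fun _ p => (next p).1) i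
    have hGsucc : ∀ i, G (i + 1) = (next (G i)).1 := fun i => rfl
    let A : ℕ → κ := fun i => (next (G i)).2
    let mseq : ℕ → ℕ := fun i => (G i).1 0
    have P1 : ∀ i m, (G (i + 1)).1 m ∈ Set.range (G i).1 ∧ mseq i < (G (i + 1)).1 m := by
      intro i m
      have := (step (G i)).choose_spec.1 m
      exact this
    have P2 : ∀ i (s : Fin n → ℕ), StrictMono s →
        c (Fin.cons (mseq i) ((G (i + 1)).1 ∘ s)) = A i := by
      intro i s hs
      exact (step (G i)).choose_spec.2 s hs
    have rangemono : ∀ i j, i ≤ j → Set.range (G j).1 ⊆ Set.range (G i).1 := by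
      intro i j hij
      induction j with
      | zero => simp_all
      | succ j ihj =>
        rcases Nat.eq_or_lt_of_le hij with h | h
        · subst h; exact subset_rfl
        · refine subset_trans ?_ (ihj (by omega))
          rintro _ ⟨m, rfl⟩
          exact (P1 j m).1
    have hmseq : StrictMono mseq := by
      apply strictMono_nat_of_lt_succ
      intro i
      exact (P1 i 0).2
    obtain ⟨a, ha⟩ := Finite.exists_infinite_fiber A
    have hinf : (A ⁻¹' {a}).Infinite := Set.infinite_coe_iff.mp ha
    haveI : Infinite (A ⁻¹' {a} : Set ℕ) := ha
    haveI : DecidablePred (· ∈ A ⁻¹' {a}) := fun _ => Classical.dec _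
    let φ : ℕ ↪o ℕ := Nat.orderEmbeddingOfSet (A ⁻¹' {a})
    have hφmem : ∀ i, A (φ i) = a := by
      intro i
      have : φ i ∈ A ⁻¹' {a} := by
        rw [← Nat.orderEmbeddingOfSet_range (A ⁻¹' {a})]
        exact ⟨i, rfl⟩
      exact this
    refine ⟨fun i => mseq (φ i), hmseq.comp φ.strictMono, a, fun t ht => ?_⟩
    set i₀ : ℕ := φ (t 0) with hi₀
    have htail : ∀ j : Fin n, mseq (φ (t j.succ)) ∈ Set.range (G (i₀ + 1)).1 := by
      intro j
      have h1 : i₀ + 1 ≤ φ (t j.succ) := by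
        have : t 0 < t j.succ := ht (Fin.succ_pos j)
        exact Nat.succ_le_of_lt (φ.strictMono this)
      exact rangemono _ _ h1 ⟨0, rfl⟩
    have htailmono : StrictMono (fun j : Fin n => mseq (φ (t j.succ))) := by
      intro j j' hjj'
      exact hmseq (φ.strictMono (ht (by simpa using hjj')))
    obtain ⟨s, hs, hfac⟩ := exists_factor (G (i₀ + 1)).2 _ htailmono htail
    have hcons : (fun i => mseq (φ i)) ∘ t = Fin.cons (mseq i₀) ((G (i₀ + 1)).1 ∘ s) := by
      funext j
      refine Fin.cases ?_ (fun j => ?_) j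
      · simp [hi₀]
      · have := congrFun hfac j
        simpa [Function.comp] using this
    rw [hcons, P2 _ _ hs, hφmem]

/-- Stabilize a bounded real function on tuples up to `ε` on an infinite subset. -/
lemma osc {n : ℕ} (F : (Fin n → ℕ) → ℝ) (B ε : ℝ) (hε : 0 < ε) (hF : ∀ t, |F t| ≤ B) :
    ∃ f : ℕ → ℕ, StrictMono f ∧ ∀ t t' : Fin n → ℕ, StrictMono t → StrictMono t' →
      |F (f ∘ t) - F (f ∘ t')| ≤ ε := by
  classical
  haveI : Finite (Set.Icc (⌊-B / ε⌋) ⌊B / ε⌋) := (Set.finite_Icc _ _).to_subtype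
  have hmem : ∀ t, ⌊F t / ε⌋ ∈ Set.Icc (⌊-B / ε⌋) ⌊B / ε⌋ := by
    intro t
    have h1 := (abs_le.mp (hF t)).1
    have h2 := (abs_le.mp (hF t)).2
    constructor
    · exact Int.floor_le_floor (by gcongr)
    · exact Int.floor_le_floor (by gcongr)
  obtain ⟨f, hf, a, ha⟩ := ramseyMono n
    (fun t => (⟨⌊F t / ε⌋, hmem t⟩ : Set.Icc (⌊-B / ε⌋) ⌊B / ε⌋))
  refine ⟨f, hf, fun t t' ht ht' => ?_⟩
  have heq : ⌊F (f ∘ t) / ε⌋ = ⌊F (f ∘ t') / ε⌋ := by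
    have h1 := ha t ht
    have h2 := ha t' ht'
    have := h1.trans h2.symm
    exact congrArg Subtype.val this
  have habs : |F (f ∘ t) / ε - F (f ∘ t') / ε| < 1 := Int.abs_sub_lt_one_of_floor_eq_floor heq
  rw [div_sub_div_same, abs_div, abs_of_pos hε, div_lt_one hε] at habs
  exact habs.le

end Ramsey

section Phi
variable {X : Type*} [NormedAddCommGroup X] [NormedSpace ℝ X]
variable {k : ℕ} (x : (Fin k → ℕ) → X)

def plegIdx (m : ℕ) {k : ℕ} (i' : Fin k) (j : Fin (m + 1)) : Fin ((m + 1) * k) :=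
  ⟨(i' : ℕ) * (m + 1) + (j : ℕ), by
    have h1 : (i' : ℕ) + 1 ≤ k := i'.2
    have h2 : (j : ℕ) < m + 1 := j.2
    calc (i' : ℕ) * (m + 1) + (j : ℕ) < ((i' : ℕ) + 1) * (m + 1) := by nlinarith
    _ ≤ k * (m + 1) := Nat.mul_le_mul_right _ h1
    _ = (m + 1) * k := Nat.mul_comm _ _⟩

def pleg {m k : ℕ} (t : Fin ((m + 1) * k) → ℕ) (j : Fin (m + 1)) : Fin k → ℕ :=
  fun i' => t (plegIdx m i' j)

def phiF (m : ℕ) (a : Fin (m + 1) → ℝ) (t : Fin ((m + 1) * k) → ℕ) : ℝ :=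
  ‖∑ j : Fin (m + 1), a j • x (pleg t j)‖

/-- The reindexing map embedding the flattened `(m+1)`-plegma positions into the
flattened `(d+1)`-plegma positions along `f`. -/
def sprIdx (m d : ℕ) {k : ℕ} (f : Fin (m + 1) → ℕ) (hfd : ∀ i, f i ≤ d) :
    Fin ((m + 1) * k) → Fin ((d + 1) * k) :=
  fun r => ⟨(r / (m + 1)) * (d + 1) + f ⟨(r : ℕ) % (m + 1), Nat.mod_lt _ (Nat.succ_pos m)⟩, by
    have hdiv : (r : ℕ) / (m + 1) < k := by
      rw [Nat.div_lt_iff_lt_mul (Nat.succ_pos m)]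
      exact lt_of_lt_of_eq r.2 (Nat.mul_comm _ _)
    have hf := hfd ⟨(r : ℕ) % (m + 1), Nat.mod_lt _ (Nat.succ_pos m)⟩
    calc (r : ℕ) / (m + 1) * (d + 1) + f _ < ((r : ℕ) / (m + 1) + 1) * (d + 1) := by
          have hs : ((r : ℕ) / (m + 1) + 1) * (d + 1) = (r : ℕ) / (m + 1) * (d + 1) + (d + 1) :=
            Nat.succ_mul _ _
          omega
    _ ≤ k * (d + 1) := Nat.mul_le_mul_right _ hdiv
    _ = (d + 1) * k := Nat.mul_comm _ _⟩

lemma sprIdx_plegIdx (m d : ℕ) {k : ℕ} (f : Fin (m + 1) → ℕ) (hfd : ∀ i, f i ≤ d)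
    (i' : Fin k) (j : Fin (m + 1)) :
    sprIdx m d f hfd (plegIdx m i' j) =
      plegIdx d i' ⟨f j, Nat.lt_succ_of_le (hfd j)⟩ := by
  apply Fin.ext
  have hdiv : ((i' : ℕ) * (m + 1) + (j : ℕ)) / (m + 1) = (i' : ℕ) := by
    rw [Nat.add_comm, Nat.add_mul_div_right _ _ (Nat.succ_pos m), Nat.div_eq_of_lt j.2]
    omega
  have hmod : ((i' : ℕ) * (m + 1) + (j : ℕ)) % (m + 1) = (j : ℕ) := by
    rw [Nat.add_comm, Nat.add_mul_mod_self_right, Nat.mod_eq_of_lt j.2]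
  simp only [sprIdx, plegIdx]
  congr 1
  · rw [hdiv]
  · congr 1; apply Fin.ext; exact hmod

lemma sprIdx_strictMono (m d : ℕ) {k : ℕ} (f : Fin (m + 1) → ℕ) (hf : StrictMono f)
    (hfd : ∀ i, f i ≤ d) : StrictMono (sprIdx m d f hfd (k := k)) := by
  intro r r' hrr'
  simp only [sprIdx, Fin.mk_lt_mk, Fin.lt_def]
  have hr : (r : ℕ) < (r' : ℕ) := hrr'
  have hd : (r : ℕ) / (m + 1) ≤ (r' : ℕ) / (m + 1) := Nat.div_le_div_right hr.le
  rcases Nat.eq_or_lt_of_le hd with heq | hlt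
  · have e1 := Nat.div_add_mod (r : ℕ) (m + 1)
    have e2 := Nat.div_add_mod (r' : ℕ) (m + 1)
    rw [heq] at e1
    have hmod : (r : ℕ) % (m + 1) < (r' : ℕ) % (m + 1) := by omega
    have := hf (show (⟨(r : ℕ) % (m + 1), Nat.mod_lt _ (Nat.succ_pos m)⟩ : Fin (m + 1)) <
      ⟨(r' : ℕ) % (m + 1), Nat.mod_lt _ (Nat.succ_pos m)⟩ from hmod)
    rw [heq]
    omega
  · have hfle := hfd ⟨(r : ℕ) % (m + 1), Nat.mod_lt _ (Nat.succ_pos m)⟩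
    calc (r : ℕ) / (m + 1) * (d + 1) + f _ < ((r : ℕ) / (m + 1) + 1) * (d + 1) := by
          have hs : ((r : ℕ) / (m + 1) + 1) * (d + 1) = (r : ℕ) / (m + 1) * (d + 1) + (d + 1) :=
            Nat.succ_mul _ _
          omega
    _ ≤ (r' : ℕ) / (m + 1) * (d + 1) := Nat.mul_le_mul_right _ hlt
    _ ≤ _ := Nat.le_add_right _ _

lemma sum_spread {Y : Type*} [AddCommGroup Y] [Module ℝ Y] (m d : ℕ)
    (a : Fin (m + 1) → ℝ) (f : Fin (m + 1) → ℕ) (hf : Function.Injective f)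
    (hfd : ∀ i, f i ≤ d) (X : Fin (d + 1) → Y) :
    ∑ j : Fin (d + 1), ((∑ i, a i • Finsupp.single (f i) (1 : ℝ)) (j : ℕ)) • X j
      = ∑ i, a i • X ⟨f i, Nat.lt_succ_of_le (hfd i)⟩ := by
  classical
  have hw : ∀ j : Fin (d + 1), ((∑ i, a i • Finsupp.single (f i) (1 : ℝ)) (j : ℕ))
      = ∑ i, a i * (if f i = (j : ℕ) then 1 else 0) := by
    intro j
    rw [Finset.sum_apply']
    refine Finset.sum_congr rfl fun i _ => ?_
    rw [Finsupp.smul_apply, Finsupp.single_apply, smul_eq_mul]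
  calc ∑ j : Fin (d + 1), ((∑ i, a i • Finsupp.single (f i) (1 : ℝ)) (j : ℕ)) • X j
      = ∑ j : Fin (d + 1), ∑ i, (a i * (if f i = (j : ℕ) then 1 else 0)) • X j := by
        refine Finset.sum_congr rfl fun j _ => ?_
        rw [hw j, Finset.sum_smul]
    _ = ∑ i, ∑ j : Fin (d + 1), (a i * (if f i = (j : ℕ) then 1 else 0)) • X j :=
        Finset.sum_comm
    _ = ∑ i, a i • X ⟨f i, Nat.lt_succ_of_le (hfd i)⟩ := by
        refine Finset.sum_congr rfl fun i _ => ?_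
        have : ∀ j : Fin (d + 1), (a i * (if f i = (j : ℕ) then 1 else 0)) • X j
            = if j = ⟨f i, Nat.lt_succ_of_le (hfd i)⟩ then a i • X j else 0 := by
          intro j
          by_cases hj : f i = (j : ℕ)
          · have hje : j = ⟨f i, Nat.lt_succ_of_le (hfd i)⟩ := by
              apply Fin.ext; exact hj.symm
            rw [if_pos hj, if_pos hje, mul_one]
          · have hje : ¬ (j = ⟨f i, Nat.lt_succ_of_le (hfd i)⟩) := by
              intro h; apply hj; rw [h]
            rw [if_neg hj, if_neg hje, mul_zero, zero_smul]
        rw [Finset.sum_congr rfl fun j _ => this j, Finset.sum_ite_eq' Finset.univ]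
        simp

lemma phiF_spread (m d : ℕ) (a : Fin (m + 1) → ℝ) (f : Fin (m + 1) → ℕ)
    (hf : StrictMono f) (hfd : ∀ i, f i ≤ d) (t : Fin ((d + 1) * k) → ℕ) :
    phiF x d (fun j : Fin (d + 1) => (∑ i, a i • Finsupp.single (f i) (1 : ℝ)) (j : ℕ)) t
      = phiF x m a (t ∘ sprIdx m d f hfd) := by
  unfold phiF
  rw [sum_spread m d a f hf.injective hfd (fun j => x (pleg t j))]
  refine congrArg _ (Finset.sum_congr rfl fun i _ => ?_)
  refine congrArg _ (congrArg x ?_)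
  funext i'
  show t (plegIdx d i' ⟨f i, _⟩) = t (sprIdx m d f hfd (plegIdx m i' i))
  exact (congrArg t (sprIdx_plegIdx m d f hfd i' i)).symm

lemma phiF_nonneg (m : ℕ) (a : Fin (m + 1) → ℝ) (t : Fin ((m + 1) * k) → ℕ) :
    0 ≤ phiF x m a t := norm_nonneg _

lemma phiF_lip {C : ℝ} (hx : ∀ s, ‖x s‖ ≤ C) (m : ℕ) (a b : Fin (m + 1) → ℝ)
    (t : Fin ((m + 1) * k) → ℕ) :
    |phiF x m a t - phiF x m b t| ≤ (∑ j, |a j - b j|) * C := by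
  refine le_trans (abs_norm_sub_norm_le _ _) ?_
  rw [← Finset.sum_sub_distrib]
  refine le_trans (norm_sum_le _ _) ?_
  rw [Finset.sum_mul]
  refine Finset.sum_le_sum fun j _ => ?_
  rw [← sub_smul, norm_smul, Real.norm_eq_abs]
  exact mul_le_mul_of_nonneg_left (hx _) (abs_nonneg _)

lemma phiF_bound {C : ℝ} (hC : 0 ≤ C) (hx : ∀ s, ‖x s‖ ≤ C) (m : ℕ) (a : Fin (m + 1) → ℝ)
    (t : Fin ((m + 1) * k) → ℕ) :
    |phiF x m a t| ≤ (∑ j, |a j|) * C := by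
  rw [abs_of_nonneg (phiF_nonneg x m a t)]
  have := phiF_lip x hx m a 0 t
  simp only [phiF, Pi.zero_apply, zero_smul, Finset.sum_const_zero, norm_zero, sub_zero,
    sub_zero] at this ⊢
  exact (le_abs_self _).trans this

lemma phiF_smul (m : ℕ) (c : ℝ) (a : Fin (m + 1) → ℝ) (t : Fin ((m + 1) * k) → ℕ) :
    phiF x m (c • a) t = |c| * phiF x m a t := by
  unfold phiF
  rw [← Real.norm_eq_abs, ← norm_smul, Finset.smul_sum]
  congr 1
  refine Finset.sum_congr rfl fun j _ => ?_
  simp [smul_smul]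

lemma phiF_add_le (m : ℕ) (a b : Fin (m + 1) → ℝ) (t : Fin ((m + 1) * k) → ℕ) :
    phiF x m (a + b) t ≤ phiF x m a t + phiF x m b t := by
  unfold phiF
  refine le_trans (le_of_eq ?_) (norm_add_le _ _)
  rw [← Finset.sum_add_distrib]
  refine congrArg _ (Finset.sum_congr rfl fun j _ => ?_)
  simp [add_smul]


/-- Flatten a plegma family into a single tuple. -/
def flat {m k : ℕ} (p : Fin (m + 1) → Fin k → ℕ) : Fin ((m + 1) * k) → ℕ :=
  fun r => p ⟨(r : ℕ) % (m + 1), Nat.mod_lt _ (Nat.succ_pos m)⟩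
    ⟨(r : ℕ) / (m + 1), by
      rw [Nat.div_lt_iff_lt_mul (Nat.succ_pos m)]
      exact lt_of_lt_of_eq r.2 (Nat.mul_comm _ _)⟩

lemma pleg_flat {m k : ℕ} (p : Fin (m + 1) → Fin k → ℕ) (j : Fin (m + 1)) :
    pleg (flat p) j = p j := by
  funext i'
  have hk : ((plegIdx m i' j : Fin ((m + 1) * k)) : ℕ) / (m + 1) < k := by
    rw [Nat.div_lt_iff_lt_mul (Nat.succ_pos m)]
    exact lt_of_lt_of_eq (plegIdx m i' j).2 (Nat.mul_comm _ _)
  have e1 : (⟨((plegIdx m i' j : Fin ((m + 1) * k)) : ℕ) % (m + 1),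
      Nat.mod_lt _ (Nat.succ_pos m)⟩ : Fin (m + 1)) = j := by
    apply Fin.ext
    show ((i' : ℕ) * (m + 1) + (j : ℕ)) % (m + 1) = (j : ℕ)
    rw [Nat.add_comm, Nat.add_mul_mod_self_right, Nat.mod_eq_of_lt j.2]
  have e2 : (⟨((plegIdx m i' j : Fin ((m + 1) * k)) : ℕ) / (m + 1), hk⟩ : Fin k) = i' := by
    apply Fin.ext
    show ((i' : ℕ) * (m + 1) + (j : ℕ)) / (m + 1) = (i' : ℕ)
    rw [Nat.add_comm, Nat.add_mul_div_right _ _ (Nat.succ_pos m), Nat.div_eq_of_lt j.2]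
    omega
  change flat p (plegIdx m i' j) = p j i'
  unfold flat
  exact congr (congrArg p e1) e2

lemma flat_strictMono {m k : ℕ} {p : Fin (m + 1) → Fin k → ℕ}
    (h1 : ∀ j, Monotone (p j))
    (h2 : ∀ i' : Fin k, StrictMono (fun j => p j i'))
    (h3 : ∀ (i : Fin k) (hi : (i : ℕ) + 1 < k) (j j' : Fin (m + 1)),
      p j i < p j' ⟨(i : ℕ) + 1, hi⟩) :
    StrictMono (flat p) := by
  intro r r' hrr'
  have hr : (r : ℕ) < (r' : ℕ) := hrr'
  unfold flat
  set i1 : Fin k := ⟨(r : ℕ) / (m + 1), by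
    rw [Nat.div_lt_iff_lt_mul (Nat.succ_pos m)]
    exact lt_of_lt_of_eq r.2 (Nat.mul_comm _ _)⟩ with hi1
  set i2 : Fin k := ⟨(r' : ℕ) / (m + 1), by
    rw [Nat.div_lt_iff_lt_mul (Nat.succ_pos m)]
    exact lt_of_lt_of_eq r'.2 (Nat.mul_comm _ _)⟩ with hi2
  have hd : (i1 : ℕ) ≤ (i2 : ℕ) := Nat.div_le_div_right hr.le
  rcases Nat.eq_or_lt_of_le hd with heq | hlt
  · have hmod : (r : ℕ) % (m + 1) < (r' : ℕ) % (m + 1) := by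
      have e1 := Nat.div_add_mod (r : ℕ) (m + 1)
      have e2 := Nat.div_add_mod (r' : ℕ) (m + 1)
      have : (m + 1) * ((r : ℕ) / (m + 1)) = (m + 1) * ((r' : ℕ) / (m + 1)) := by
        have : (r : ℕ) / (m + 1) = (r' : ℕ) / (m + 1) := heq
        rw [this]
      omega
    have hii : i1 = i2 := Fin.ext heq
    rw [hii]
    exact h2 i2 (show (⟨(r : ℕ) % (m + 1), _⟩ : Fin (m + 1)) < ⟨(r' : ℕ) % (m + 1), _⟩ from hmod)
  · have hik : (i1 : ℕ) + 1 < k := by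
      have := i2.2
      omega
    calc p ⟨(r : ℕ) % (m + 1), _⟩ i1 < p ⟨(r' : ℕ) % (m + 1), _⟩ ⟨(i1 : ℕ) + 1, hik⟩ :=
        h3 i1 hik _ _
    _ ≤ p ⟨(r' : ℕ) % (m + 1), _⟩ i2 := h1 _ (show ((⟨(i1 : ℕ) + 1, hik⟩ : Fin k) ≤ i2) from hlt)

variable (C : ℝ) (Mf : ℕ → ℕ)

/-- `t` is an admissible tuple at level `l`: strictly monotone, valued in `range Mf`,
with all entries `≥ Mf l`. -/
def Adml (Mf : ℕ → ℕ) (l : ℕ) {n : ℕ} (t : Fin n → ℕ) : Prop :=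
  StrictMono t ∧ ∀ r, t r ∈ Set.range Mf ∧ Mf l ≤ t r

/-- The canonical admissible tuple at level `l`. -/
def canonT (Mf : ℕ → ℕ) (m l : ℕ) : Fin ((m + 1) * k) → ℕ := fun r => Mf (l + r)

/-- Dyadic rational approximation. -/
noncomputable def netQ (a : ℝ) (d : ℕ) : ℚ := (⌊a * 2 ^ d⌋ : ℚ) / 2 ^ d

lemma abs_sub_netQ (a : ℝ) (d : ℕ) : |a - ((netQ a d : ℚ) : ℝ)| ≤ (1 / 2) ^ d := by
  have h2d : (0 : ℝ) < 2 ^ d := by positivity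
  have hcast : ((netQ a d : ℚ) : ℝ) = (⌊a * 2 ^ d⌋ : ℝ) / 2 ^ d := by
    unfold netQ; push_cast; ring
  have h1 : (⌊a * 2 ^ d⌋ : ℝ) ≤ a * 2 ^ d := Int.floor_le _
  have h2 : a * 2 ^ d < ⌊a * 2 ^ d⌋ + 1 := Int.lt_floor_add_one _
  have hkey : a - ((netQ a d : ℚ) : ℝ) = (a * 2 ^ d - ⌊a * 2 ^ d⌋) / 2 ^ d := by
    rw [hcast]; field_simp
  rw [hkey, abs_div, abs_of_pos h2d, div_le_iff₀ h2d, abs_of_nonneg (by linarith), one_div,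
    inv_pow, inv_mul_cancel₀ (by positivity)]
  linarith

lemma netQ_num_bound (a : ℝ) (d : ℕ) (ha : |a| ≤ (d : ℝ) + 1) :
    |⌊a * 2 ^ d⌋| ≤ ((d + 1) * 2 ^ d : ℕ) := by
  have h2d : (0 : ℝ) < 2 ^ d := by positivity
  rw [abs_le] at ha ⊢
  constructor
  · rw [Int.le_floor]
    push_cast
    nlinarith
  · calc ⌊a * 2 ^ d⌋ ≤ ⌊(((d + 1) * 2 ^ d : ℕ) : ℝ)⌋ :=
        Int.floor_le_floor (by push_cast; nlinarith)
    _ = ((d + 1) * 2 ^ d : ℕ) := Int.floor_natCast _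

variable (C : ℝ) (Mf : ℕ → ℕ)

/-- The master oscillation property obtained from the Ramsey diagonalization. -/
def HMprop : Prop := ∀ l m, m ≤ l → ∀ q : Fin (m + 1) → ℚ,
  (∀ j, ∃ z : ℤ, |z| ≤ ((l + 1) * 2 ^ l : ℕ) ∧ q j = (z : ℚ) / 2 ^ l) →
  ∀ t t' : Fin ((m + 1) * k) → ℕ, Adml Mf l t → Adml Mf l t' →
  |phiF x m (fun j => ((q j : ℚ) : ℝ)) t - phiF x m (fun j => ((q j : ℚ) : ℝ)) t'| ≤ (1 / 2) ^ l


lemma keyOsc (hC : 0 < C) (hx : ∀ s, ‖x s‖ ≤ C) (HM : HMprop x Mf) :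
    ∀ l m (a : Fin (m + 1) → ℝ), m ≤ l → (∀ j, |a j| ≤ (l : ℝ) + 1) →
    ∀ t t' : Fin ((m + 1) * k) → ℕ, Adml Mf l t → Adml Mf l t' →
    |phiF x m a t - phiF x m a t'| ≤ (2 * C * (m + 1) + 1) * (1 / 2) ^ l := by
  intro l m a hml ha t t' ht ht'
  set q : Fin (m + 1) → ℚ := fun j => netQ (a j) l with hq
  have hqnet : ∀ j, ∃ z : ℤ, |z| ≤ ((l + 1) * 2 ^ l : ℕ) ∧ q j = (z : ℚ) / 2 ^ l := by
    intro j
    exact ⟨⌊a j * 2 ^ l⌋, netQ_num_bound (a j) l (ha j), rfl⟩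
  have hmid := HM l m hml q hqnet t t' ht ht'
  have hsum : (∑ j, |a j - ((q j : ℚ) : ℝ)|) ≤ (m + 1) * (1 / 2) ^ l := by
    calc (∑ j, |a j - ((q j : ℚ) : ℝ)|) ≤ ∑ _j : Fin (m + 1), (1 / 2 : ℝ) ^ l :=
        Finset.sum_le_sum fun j _ => abs_sub_netQ (a j) l
    _ = (m + 1) * (1 / 2) ^ l := by
        rw [Finset.sum_const, Finset.card_univ, Fintype.card_fin, nsmul_eq_mul]
        push_cast; ring
  have h1 : |phiF x m a t - phiF x m (fun j => ((q j : ℚ) : ℝ)) t| ≤ ((m + 1) * (1 / 2) ^ l) * C :=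
    le_trans (phiF_lip x hx m a _ t) (by
      apply mul_le_mul_of_nonneg_right _ hC.le
      exact hsum)
  have h2 : |phiF x m a t' - phiF x m (fun j => ((q j : ℚ) : ℝ)) t'| ≤ ((m + 1) * (1 / 2) ^ l) * C :=
    le_trans (phiF_lip x hx m a _ t') (by
      apply mul_le_mul_of_nonneg_right _ hC.le
      exact hsum)
  have hpow : (0 : ℝ) ≤ (1 / 2) ^ l := by positivity
  calc |phiF x m a t - phiF x m a t'|
      ≤ |phiF x m a t - phiF x m (fun j => ((q j : ℚ) : ℝ)) t'|
        + |phiF x m (fun j => ((q j : ℚ) : ℝ)) t' - phiF x m a t'| := abs_sub_le _ _ _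
    _ ≤ (|phiF x m a t - phiF x m (fun j => ((q j : ℚ) : ℝ)) t|
        + |phiF x m (fun j => ((q j : ℚ) : ℝ)) t - phiF x m (fun j => ((q j : ℚ) : ℝ)) t'|)
        + |phiF x m (fun j => ((q j : ℚ) : ℝ)) t' - phiF x m a t'| :=
        add_le_add (abs_sub_le _ _ _) le_rfl
    _ ≤ ((m + 1) * (1 / 2) ^ l) * C + (1 / 2) ^ l + ((m + 1) * (1 / 2) ^ l) * C := by
        rw [abs_sub_comm (phiF x m (fun j => ((q j : ℚ) : ℝ)) t')]
        exact add_le_add (add_le_add h1 hmid) h2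
    _ = (2 * C * (m + 1) + 1) * (1 / 2) ^ l := by ring

lemma adml_mono {l l' n : ℕ} (hMf : StrictMono Mf) (h : l ≤ l') (t : Fin n → ℕ)
    (ht : Adml Mf l' t) : Adml Mf l t :=
  ⟨ht.1, fun r => ⟨(ht.2 r).1, le_trans (hMf.monotone h) (ht.2 r).2⟩⟩

lemma adml_canon (hMf : StrictMono Mf) (m l : ℕ) : Adml Mf l (canonT (k := k) Mf m l) := by
  refine ⟨fun r r' hrr' => hMf (by omega : l + (r : ℕ) < l + (r' : ℕ)), fun r => ⟨⟨l + r, rfl⟩, ?_⟩⟩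
  exact hMf.monotone (Nat.le_add_right _ _)

lemma bnd_small (hC : 0 < C) (m : ℕ) : ∀ ε > (0 : ℝ), ∃ N : ℕ, ∀ l ≥ N,
    (2 * C * (m + 1) + 1) * (1 / 2) ^ l < ε := by
  intro ε hε
  have h0 : Tendsto (fun l : ℕ => (2 * C * (m + 1) + 1) * (1 / 2 : ℝ) ^ l) atTop (nhds 0) := by
    rw [show (0 : ℝ) = (2 * C * (m + 1) + 1) * 0 by ring]
    exact (tendsto_pow_atTop_nhds_zero_of_lt_one (by norm_num) (by norm_num)).const_mul _
  exact (h0.eventually (gt_mem_nhds hε)).exists_forall_of_atTop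

lemma exists_lim (hC : 0 < C) (hx : ∀ s, ‖x s‖ ≤ C) (hMf : StrictMono Mf) (HM : HMprop x Mf) :
    ∀ m (a : Fin (m + 1) → ℝ), ∃ L : ℝ,
    Tendsto (fun l => phiF x m a (canonT (k := k) Mf m l)) atTop (nhds L) ∧
    ∀ l, m ≤ l → (∀ j, |a j| ≤ (l : ℝ) + 1) → ∀ t : Fin ((m + 1) * k) → ℕ, Adml Mf l t →
      |phiF x m a t - L| ≤ (2 * C * (m + 1) + 1) * (1 / 2) ^ l := by
  intro m a
  obtain ⟨R, hR⟩ : ∃ R : ℕ, ∀ j, |a j| ≤ (R : ℝ) + 1 := by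
    refine ⟨⌈∑ j, |a j|⌉₊, fun j => ?_⟩
    have h1 : |a j| ≤ ∑ j', |a j'| :=
      Finset.single_le_sum (f := fun j' => |a j'|) (fun _ _ => abs_nonneg _) (Finset.mem_univ j)
    have h2 : (∑ j', |a j'|) ≤ (⌈∑ j', |a j'|⌉₊ : ℝ) := Nat.le_ceil _
    linarith
  have habs : ∀ N l₁ l₂, m ≤ N → R ≤ N → N ≤ l₁ → N ≤ l₂ →
      |phiF x m a (canonT (k := k) Mf m l₁) - phiF x m a (canonT (k := k) Mf m l₂)|
        ≤ (2 * C * (m + 1) + 1) * (1 / 2) ^ N := by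
    intro N l₁ l₂ hmN hRN h1 h2
    refine keyOsc x C Mf hC hx HM N m a hmN
      (fun j => le_trans (hR j) (by
        have := (Nat.cast_le (α := ℝ)).mpr hRN; linarith)) _ _
      (adml_mono Mf hMf h1 _ (adml_canon (k := k) Mf hMf m l₁))
      (adml_mono Mf hMf h2 _ (adml_canon (k := k) Mf hMf m l₂))
  have hcauchy : CauchySeq (fun l => phiF x m a (canonT (k := k) Mf m l)) := by
    rw [Metric.cauchySeq_iff]
    intro ε hε
    obtain ⟨N₀, hN₀⟩ := bnd_small C hC m ε hε
    refine ⟨max N₀ (max m R), fun l₁ hl₁ l₂ hl₂ => ?_⟩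
    rw [Real.dist_eq]
    calc |phiF x m a (canonT (k := k) Mf m l₁) - phiF x m a (canonT (k := k) Mf m l₂)|
        ≤ (2 * C * (m + 1) + 1) * (1 / 2) ^ (max N₀ (max m R)) :=
          habs _ l₁ l₂ ((le_max_left m R).trans (le_max_right _ _))
            ((le_max_right m R).trans (le_max_right _ _)) hl₁ hl₂
      _ < ε := hN₀ _ (le_max_left _ _)
  obtain ⟨L, hL⟩ := cauchySeq_tendsto_of_complete hcauchy
  refine ⟨L, hL, fun l hml hal t ht => ?_⟩
  have hstep : ∀ l' ≥ l, |phiF x m a t - phiF x m a (canonT (k := k) Mf m l')|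
      ≤ (2 * C * (m + 1) + 1) * (1 / 2) ^ l := by
    intro l' hl'
    exact keyOsc x C Mf hC hx HM l m a hml hal t _ ht
      (adml_mono Mf hMf hl' _ (adml_canon (k := k) Mf hMf m l'))
  have htend : Tendsto (fun l' => |phiF x m a t - phiF x m a (canonT (k := k) Mf m l')|)
      atTop (nhds |phiF x m a t - L|) := (tendsto_const_nhds.sub hL).abs
  exact le_of_tendsto htend (Filter.eventually_atTop.mpr ⟨l, hstep⟩)

lemma exists_R (m : ℕ) (a : Fin (m + 1) → ℝ) : ∃ R : ℕ, ∀ j, |a j| ≤ (R : ℝ) + 1 := by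
  refine ⟨⌈∑ j, |a j|⌉₊, fun j => ?_⟩
  have h1 : |a j| ≤ ∑ j', |a j'| :=
    Finset.single_le_sum (f := fun j' => |a j'|) (fun _ _ => abs_nonneg _) (Finset.mem_univ j)
  have h2 : (∑ j', |a j'|) ≤ (⌈∑ j', |a j'|⌉₊ : ℝ) := Nat.le_ceil _
  linarith

lemma adml_comp {l n n' : ℕ} {t : Fin n → ℕ} (ht : Adml Mf l t) {ι : Fin n' → Fin n}
    (hι : StrictMono ι) : Adml Mf l (t ∘ ι) :=
  ⟨ht.1.comp hι, fun r => ht.2 (ι r)⟩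

lemma mainConstruction (hC : 0 < C) (hx : ∀ s, ‖x s‖ ≤ C) (hMf : StrictMono Mf)
    (HM : HMprop x Mf) :
    ∃ ρ : Seminorm ℝ (ℕ →₀ ℝ),
      IsSpreadingWith ρ (fun n => Finsupp.single n (1 : ℝ)) ∧
      ∀ m l, m ≤ l → ∀ t : Fin ((m + 1) * k) → ℕ, Adml Mf l t →
        ∀ a : Fin (m + 1) → ℝ, (∀ j, |a j| ≤ 1) →
        |phiF x m a t - ρ (∑ j : Fin (m + 1), a j • Finsupp.single (j : ℕ) (1 : ℝ))|
          ≤ (2 * C * ((l : ℝ) + 1) + 1) * (1 / 2) ^ l := by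
  classical
  choose Lim hspec using exists_lim x C Mf hC hx hMf HM
  have hT := fun m a => (hspec m a).1
  have hA := fun m a => (hspec m a).2
  have hLim_spread : ∀ m d (a : Fin (m + 1) → ℝ) (f : Fin (m + 1) → ℕ) (hf : StrictMono f)
      (hfd : ∀ i, f i ≤ d),
      Lim d (fun j : Fin (d + 1) => (∑ i, a i • Finsupp.single (f i) (1 : ℝ)) (j : ℕ))
        = Lim m a := by
    intro m d a f hf hfd
    refine tendsto_nhds_unique (hT d _) ?_
    have heq : (fun l => phiF x d
          (fun j : Fin (d + 1) => (∑ i, a i • Finsupp.single (f i) (1 : ℝ)) (j : ℕ))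
          (canonT (k := k) Mf d l))
        = fun l => phiF x m a ((canonT (k := k) Mf d l) ∘ sprIdx m d f hfd) :=
      funext fun l => phiF_spread x m d a f hf hfd _
    rw [heq]
    obtain ⟨R, hR⟩ := exists_R m a
    rw [Metric.tendsto_atTop]
    intro ε hε
    obtain ⟨N₀, hN₀⟩ := bnd_small C hC m ε hε
    set N := max N₀ (max m R) with hN
    refine ⟨N, fun l hl => ?_⟩
    rw [Real.dist_eq]
    have hadm : Adml Mf N ((canonT (k := k) Mf d l) ∘ sprIdx m d f hfd) :=
      adml_comp Mf (adml_mono Mf hMf hl _ (adml_canon (k := k) Mf hMf d l))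
        (sprIdx_strictMono m d f hf hfd)
    calc |phiF x m a ((canonT (k := k) Mf d l) ∘ sprIdx m d f hfd) - Lim m a|
        ≤ (2 * C * (m + 1) + 1) * (1 / 2) ^ N :=
          hA m a N ((le_max_left m R).trans (le_max_right _ _))
            (fun j => le_trans (hR j) (by
              have : (R : ℝ) ≤ (N : ℝ) :=
                Nat.cast_le.mpr ((le_max_right m R).trans (le_max_right _ _))
              linarith)) _ hadm
      _ < ε := hN₀ _ (le_max_left _ _)
  have hev : ∀ (d : ℕ) (b : Fin (d + 1) → ℝ) (nn : ℕ),
      (∑ i : Fin (d + 1), b i • Finsupp.single (i : ℕ) (1 : ℝ)) nn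
        = if h : nn < d + 1 then b ⟨nn, h⟩ else 0 := by
    intro d b nn
    rw [Finset.sum_apply']
    simp only [Finsupp.smul_apply, Finsupp.single_apply, smul_eq_mul]
    by_cases h : nn < d + 1
    · rw [dif_pos h, Finset.sum_eq_single (⟨nn, h⟩ : Fin (d + 1))]
      · simp
      · intro i _ hne
        rw [if_neg, mul_zero]
        intro hc; exact hne (Fin.ext hc)
      · intro habs; exact absurd (Finset.mem_univ _) habs
    · rw [dif_neg h, Finset.sum_eq_zero]
      intro i _
      rw [if_neg, mul_zero]
      intro hc
      have := i.2
      omega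
  have hwellDef : ∀ (v : ℕ →₀ ℝ) (d D : ℕ), d ≤ D → (∀ nn, d < nn → v nn = 0) →
      Lim D (fun j : Fin (D + 1) => v (j : ℕ)) = Lim d (fun j : Fin (d + 1) => v (j : ℕ)) := by
    intro v d D hdD hv
    have hf : StrictMono (fun i : Fin (d + 1) => (i : ℕ)) := fun _ _ h => h
    have hfd : ∀ i : Fin (d + 1), (fun i : Fin (d + 1) => (i : ℕ)) i ≤ D :=
      fun i => le_trans (Nat.lt_succ_iff.mp i.2) hdD
    have hsp := hLim_spread d D (fun j : Fin (d + 1) => v (j : ℕ)) _ hf hfd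
    rw [← hsp]
    congr 1
    funext j
    rw [hev]
    by_cases h : (j : ℕ) < d + 1
    · rw [dif_pos h]
    · rw [dif_neg h]
      exact hv (j : ℕ) (by omega)
  set dsup : (ℕ →₀ ℝ) → ℕ := fun v => v.support.sup id with hdsup
  have hvan : ∀ (v : ℕ →₀ ℝ) (nn : ℕ), dsup v < nn → v nn = 0 := by
    intro v nn h
    by_contra hne
    have h1 : nn ∈ v.support := Finsupp.mem_support_iff.mpr hne
    have h2 := Finset.le_sup (f := id) h1
    simp only [id] at h2
    have h3 : dsup v = v.support.sup id := rfl
    omega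
  set ρraw : (ℕ →₀ ℝ) → ℝ :=
    fun v => Lim (dsup v) (fun j : Fin (dsup v + 1) => v (j : ℕ)) with hρraw
  have hwell : ∀ (v : ℕ →₀ ℝ) (D : ℕ), dsup v ≤ D →
      Lim D (fun j : Fin (D + 1) => v (j : ℕ)) = ρraw v :=
    fun v D hD => hwellDef v (dsup v) D hD (hvan v)
  have hsmul : ∀ (c : ℝ) (v : ℕ →₀ ℝ), ρraw (c • v) = ‖c‖ * ρraw v := by
    intro c v
    have hsub : dsup (c • v) ≤ dsup v := Finset.sup_mono Finsupp.support_smul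
    rw [← hwell (c • v) (dsup v) hsub]
    have hfun : (fun j : Fin (dsup v + 1) => (c • v) (j : ℕ))
        = c • (fun j : Fin (dsup v + 1) => v (j : ℕ)) := by
      funext j
      simp
    rw [hfun, Real.norm_eq_abs]
    refine tendsto_nhds_unique (hT _ _) ?_
    have heq : (fun l => phiF x (dsup v) (c • fun j : Fin (dsup v + 1) => v (j : ℕ))
          (canonT (k := k) Mf (dsup v) l))
        = fun l => |c| * phiF x (dsup v) (fun j : Fin (dsup v + 1) => v (j : ℕ))
          (canonT (k := k) Mf (dsup v) l) :=
      funext fun l => phiF_smul x _ c _ _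
    rw [heq]
    exact (hT _ _).const_mul _
  have haddle : ∀ v w : ℕ →₀ ℝ, ρraw (v + w) ≤ ρraw v + ρraw w := by
    intro v w
    set D := max (dsup (v + w)) (max (dsup v) (dsup w)) with hD
    rw [← hwell (v + w) D (le_max_left _ _),
      ← hwell v D ((le_max_left _ _).trans (le_max_right _ _)),
      ← hwell w D ((le_max_right _ _).trans (le_max_right _ _))]
    have hsplit : (fun j : Fin (D + 1) => (v + w) (j : ℕ))
        = (fun j : Fin (D + 1) => v (j : ℕ)) + (fun j : Fin (D + 1) => w (j : ℕ)) := by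
      funext j
      simp
    rw [hsplit]
    refine le_of_tendsto_of_tendsto' (hT D _) ((hT D _).add (hT D _)) fun l => ?_
    exact phiF_add_le x D _ _ _
  set ρ : Seminorm ℝ (ℕ →₀ ℝ) := Seminorm.of ρraw haddle hsmul with hρ
  have hρapp : ∀ v, ρ v = ρraw v := fun v => rfl
  have hkeyval : ∀ m (a : Fin (m + 1) → ℝ),
      ρ (∑ j : Fin (m + 1), a j • Finsupp.single (j : ℕ) (1 : ℝ)) = Lim m a := by
    intro m a
    set v := ∑ j : Fin (m + 1), a j • Finsupp.single (j : ℕ) (1 : ℝ) with hv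
    have hsup : dsup v ≤ m := by
      apply Finset.sup_le
      intro nn hnn
      by_contra hgt
      push_neg at hgt
      have h0 := hev m a nn
      rw [dif_neg (by simpa using hgt)] at h0
      exact (Finsupp.mem_support_iff.mp hnn) h0
    have h1 := hwell v m hsup
    have hf : StrictMono (fun i : Fin (m + 1) => (i : ℕ)) := fun _ _ h => h
    have h2 := hLim_spread m m a _ hf (fun i => Nat.lt_succ_iff.mp i.2)
    rw [hρapp, ← h1, h2]
  refine ⟨ρ, ?_, ?_⟩
  · intro n a f hf
    match n with
    | 0 => simp
    | (m + 1) =>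
      have hL : ρ (∑ i : Fin (m + 1), a i • Finsupp.single (i : ℕ) (1 : ℝ)) = Lim m a :=
        hkeyval m a
      set w := ∑ i : Fin (m + 1), a i • Finsupp.single (f i) (1 : ℝ) with hw
      set D := max (dsup w) (f (Fin.last m)) with hD
      have hfd : ∀ i, f i ≤ D := fun i => le_trans (hf.monotone (Fin.le_last i)) (le_max_right _ _)
      have h2 := hLim_spread m D a f hf hfd
      have h1 := hwell w D (le_max_left _ _)
      show ρ _ = ρ w
      rw [hL, hρapp w, ← h1, h2]
  · intro m l hml t ht a ha
    rw [hkeyval m a]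
    have hcast : (0 : ℝ) ≤ (l : ℝ) := Nat.cast_nonneg l
    have hA' := hA m a l hml (fun j => le_trans (ha j) (by linarith)) t ht
    refine le_trans hA' ?_
    have hmlr : ((m : ℝ) + 1) ≤ ((l : ℝ) + 1) := by
      have := Nat.cast_le (α := ℝ) |>.mpr hml
      linarith
    have hp : (0 : ℝ) ≤ (1 / 2 : ℝ) ^ l := by positivity
    apply mul_le_mul_of_nonneg_right _ hp
    nlinarith

end Phi

/-- existence of k-spreading models. Every bounded `k`-sequence in a
Banach space `X` has a `k`-subsequence generating a spreading sequence, living on the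
space `ℕ →₀ ℝ` of finitely supported real sequences (with unit vectors
`fun n => Finsupp.single n 1`) equipped with some seminorm, as a `k`-spreading model
with respect to some null sequence of positive reals. -/
theorem statement7 {X : Type*} [NormedAddCommGroup X] [NormedSpace ℝ X] [CompleteSpace X]
    (k : ℕ) (hk : 0 < k) (x : (Fin k → ℕ) → X)
    (hbdd : ∃ C > 0, ∀ s : Fin k → ℕ, ‖x s‖ ≤ C) :
    ∃ (M : ℕ → ℕ) (ρ : Seminorm ℝ (ℕ →₀ ℝ)) (δ : ℕ → ℝ),
      StrictMono M ∧ IsNullPos δ ∧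
      IsSpreadingWith ρ (fun n => Finsupp.single n (1 : ℝ)) ∧
      Generates ρ x M (fun n => Finsupp.single n (1 : ℝ)) δ := by
  classical
  obtain ⟨C, hC, hx⟩ := hbdd
  haveI : Nonempty ((m : ℕ) × (Fin (m + 1) → ℚ)) := ⟨⟨0, 0⟩⟩
  obtain ⟨e, he⟩ := exists_surjective_nat ((m : ℕ) × (Fin (m + 1) → ℚ))
  set FP : ∀ P : (m : ℕ) × (Fin (m + 1) → ℚ), (Fin ((P.1 + 1) * k) → ℕ) → ℝ :=
    fun P t => phiF x P.1 (fun j => ((P.2 j : ℚ) : ℝ)) t with hFP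
  have hFPbound : ∀ P t, |FP P t| ≤ (∑ j, |((P.2 j : ℚ) : ℝ)|) * C :=
    fun P t => phiF_bound x hC.le hx _ _ t
  -- batchwise stabilization
  have hbatch : ∀ (N : ℕ) (ε : ℝ), 0 < ε → ∀ g : ℕ → ℕ, StrictMono g →
      ∃ f : ℕ → ℕ, StrictMono f ∧ ∀ j, j < N → ∀ (t t' : Fin (((e j).1 + 1) * k) → ℕ),
        StrictMono t → StrictMono t' →
        |FP (e j) ((g ∘ f) ∘ t) - FP (e j) ((g ∘ f) ∘ t')| ≤ ε := by
    intro N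
    induction N with
    | zero =>
      intro ε hε g hg
      exact ⟨id, strictMono_id, fun j hj => absurd hj (Nat.not_lt_zero j)⟩
    | succ N ih =>
      intro ε hε g hg
      obtain ⟨f₁, hf₁, hprop₁⟩ := ih ε hε g hg
      obtain ⟨f₂, hf₂, hprop₂⟩ := osc (fun t => FP (e N) ((g ∘ f₁) ∘ t))
        ((∑ j, |(((e N).2 j : ℚ) : ℝ)|) * C) ε hε (fun t => hFPbound (e N) _)
      refine ⟨f₁ ∘ f₂, hf₁.comp hf₂, fun j hj t t' ht ht' => ?_⟩
      rcases Nat.lt_or_ge j N with h | h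
      · exact hprop₁ j h (f₂ ∘ t) (f₂ ∘ t') (hf₂.comp ht) (hf₂.comp ht')
      · have hjN : j = N := by omega
        subst hjN
        exact hprop₂ t t' ht ht'
  -- diagonalization
  have step : ∀ (i : ℕ) (g : {h : ℕ → ℕ // StrictMono h}),
      ∃ g' : {h : ℕ → ℕ // StrictMono h},
      (∃ f : ℕ → ℕ, StrictMono f ∧ g'.1 = g.1 ∘ f) ∧
      ∀ j, j ≤ i → ∀ (t t' : Fin (((e j).1 + 1) * k) → ℕ), StrictMono t → StrictMono t' →
        |FP (e j) (g'.1 ∘ t) - FP (e j) (g'.1 ∘ t')| ≤ (1 / 2) ^ i := by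
    intro i g
    obtain ⟨f, hf, hprop⟩ := hbatch (i + 1) ((1 / 2) ^ i) (by positivity) g.1 g.2
    exact ⟨⟨g.1 ∘ f, g.2.comp hf⟩, ⟨f, hf, rfl⟩, fun j hj t t' ht ht' =>
      hprop j (by omega) t t' ht ht'⟩
  let G : ℕ → {h : ℕ → ℕ // StrictMono h} :=
    fun i => Nat.rec ⟨id, strictMono_id⟩ (fun i g => (step i g).choose) i
  have hGfac : ∀ i, ∃ f : ℕ → ℕ, StrictMono f ∧ (G (i + 1)).1 = (G i).1 ∘ f :=
    fun i => (step i (G i)).choose_spec.1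
  have hGosc : ∀ i, ∀ j, j ≤ i → ∀ (t t' : Fin (((e j).1 + 1) * k) → ℕ),
      StrictMono t → StrictMono t' →
      |FP (e j) ((G (i + 1)).1 ∘ t) - FP (e j) ((G (i + 1)).1 ∘ t')| ≤ (1 / 2) ^ i :=
    fun i => (step i (G i)).choose_spec.2
  have hGrange : ∀ i i', i ≤ i' → Set.range (G i').1 ⊆ Set.range (G i).1 := by
    intro i i' hii'
    induction i' with
    | zero =>
      have : i = 0 := by omega
      subst this; exact subset_rfl
    | succ i' ih =>
      rcases Nat.eq_or_lt_of_le hii' with h | h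
      · subst h; exact subset_rfl
      · refine subset_trans ?_ (ih (by omega))
        obtain ⟨f, hf, hfac⟩ := hGfac i'
        rw [hfac]
        rintro _ ⟨z, rfl⟩
        exact ⟨f z, rfl⟩
  set M₀ : ℕ → ℕ := fun l => (G (l + 1)).1 l with hM₀
  have hM₀mono : StrictMono M₀ := by
    apply strictMono_nat_of_lt_succ
    intro l
    obtain ⟨f, hf, hfac⟩ := hGfac (l + 1)
    calc M₀ l = (G (l + 1)).1 l := rfl
    _ < (G (l + 1)).1 (l + 1) := (G (l + 1)).2 (by omega)
    _ ≤ (G (l + 1)).1 (f (l + 1)) := (G (l + 1)).2.monotone hf.le_apply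
    _ = (G (l + 2)).1 (l + 1) := (congrFun hfac (l + 1)).symm
    _ = M₀ (l + 1) := rfl
  have hM₀range : ∀ l j, l ≤ j → M₀ j ∈ Set.range (G (l + 1)).1 := fun l j hlj =>
    hGrange (l + 1) (j + 1) (by omega) ⟨j, rfl⟩
  have Hm : ∀ j l, j ≤ l → ∀ (t t' : Fin (((e j).1 + 1) * k) → ℕ),
      StrictMono t → StrictMono t' →
      (∀ r, t r ∈ Set.range M₀ ∧ M₀ l ≤ t r) → (∀ r, t' r ∈ Set.range M₀ ∧ M₀ l ≤ t' r) →
      |FP (e j) t - FP (e j) t'| ≤ (1 / 2) ^ l := by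
    intro j l hjl t t' ht ht' hr hr'
    have hmem : ∀ (u : Fin (((e j).1 + 1) * k) → ℕ),
        (∀ r, u r ∈ Set.range M₀ ∧ M₀ l ≤ u r) → ∀ r, u r ∈ Set.range (G (l + 1)).1 := by
      intro u hu r
      obtain ⟨⟨s, hs⟩, hge⟩ := hu r
      have hls : l ≤ s := by
        by_contra hcon
        push_neg at hcon
        have := hM₀mono hcon
        omega
      rw [← hs]
      exact hM₀range l s hls
    obtain ⟨u, hu, huf⟩ := exists_factor (G (l + 1)).2 t ht (hmem t hr)
    obtain ⟨u', hu', huf'⟩ := exists_factor (G (l + 1)).2 t' ht' (hmem t' hr')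
    rw [huf, huf']
    exact hGosc l j hjl u u' hu hu'
  choose idx hidxspec using he
  set ImF : ℕ → Finset ℚ := fun l =>
    (Finset.Icc (-((((l + 1) * 2 ^ l : ℕ)) : ℤ)) ((((l + 1) * 2 ^ l : ℕ)) : ℤ)).image
      (fun z : ℤ => (z : ℚ) / 2 ^ l) with hImF
  set bigF : ℕ → Finset ((m : ℕ) × (Fin (m + 1) → ℚ)) := fun l =>
    (Finset.range (l + 1)).sigma (fun m => Fintype.piFinset (fun _ : Fin (m + 1) => ImF l))
    with hbigF
  set σ₀ : ℕ → ℕ := fun l => (bigF l).sup idx with hσ₀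
  set σ : ℕ → ℕ := fun l => l + (Finset.range (l + 1)).sup σ₀ with hσ
  have hσmono : StrictMono σ := by
    apply strictMono_nat_of_lt_succ
    intro l
    have hsup : (Finset.range (l + 1)).sup σ₀ ≤ (Finset.range (l + 1 + 1)).sup σ₀ :=
      Finset.sup_mono (by
        intro z hz
        simp only [Finset.mem_range] at hz ⊢
        omega)
    simp only [hσ]
    omega
  have hσge : ∀ l, l ≤ σ l := fun l => Nat.le_add_right _ _
  set Mf : ℕ → ℕ := fun l => M₀ (σ l) with hMfdef
  have hMfmono : StrictMono Mf := hM₀mono.comp hσmono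
  have HM : HMprop x Mf := by
    intro l m hml q hq t t' ht ht'
    have hPmem : (⟨m, q⟩ : (m : ℕ) × (Fin (m + 1) → ℚ)) ∈ bigF l := by
      rw [hbigF]
      simp only [Finset.mem_sigma, Finset.mem_range, Fintype.mem_piFinset]
      refine ⟨by omega, fun j => ?_⟩
      obtain ⟨z, hz, hzq⟩ := hq j
      rw [abs_le] at hz
      rw [hImF, hzq]
      exact Finset.mem_image_of_mem (fun z : ℤ => (z : ℚ) / 2 ^ l) (Finset.mem_Icc.mpr ⟨hz.1, hz.2⟩)
    set P : (m : ℕ) × (Fin (m + 1) → ℚ) := ⟨m, q⟩ with hP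
    have hidxle : idx P ≤ σ l := by
      have h1 : idx P ≤ σ₀ l := by
        rw [hσ₀]
        exact Finset.le_sup hPmem
      have h2 : σ₀ l ≤ (Finset.range (l + 1)).sup σ₀ :=
        Finset.le_sup (Finset.self_mem_range_succ l)
      have h3 : σ l = l + (Finset.range (l + 1)).sup σ₀ := rfl
      omega
    have hMm := Hm (idx P) (σ l) hidxle
    rw [hidxspec P] at hMm
    have hadm : ∀ (u : Fin ((m + 1) * k) → ℕ), Adml Mf l u →
        (∀ r, u r ∈ Set.range M₀ ∧ M₀ (σ l) ≤ u r) := by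
      intro u hu r
      obtain ⟨⟨s, hs⟩, hge⟩ := (hu.2 r)
      exact ⟨⟨σ s, hs⟩, hge⟩
    have hres := hMm t t' ht.1 ht'.1 (hadm t ht) (hadm t' ht')
    refine le_trans hres ?_
    apply pow_le_pow_of_le_one (by norm_num) (by norm_num) (hσge l)
  obtain ⟨ρ, hsprd, hgen⟩ := mainConstruction x C Mf hC hx hMfmono HM
  refine ⟨Mf, ρ, fun l => (2 * C * ((l : ℝ) + 1) + 1) * (1 / 2) ^ l, hMfmono, ⟨?_, ?_⟩,
    hsprd, ?_⟩
  · intro n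
    have h1 : (0 : ℝ) < 2 * C * ((n : ℝ) + 1) + 1 := by
      have := Nat.cast_nonneg (α := ℝ) n
      nlinarith
    have h2 : (0 : ℝ) < (1 / 2 : ℝ) ^ n := by positivity
    exact mul_pos h1 h2
  · have hp : Tendsto (fun l : ℕ => (1 / 2 : ℝ) ^ l) atTop (nhds 0) :=
      tendsto_pow_atTop_nhds_zero_of_lt_one (by norm_num) (by norm_num)
    have hlp : Tendsto (fun l : ℕ => (l : ℝ) * (1 / 2) ^ l) atTop (nhds 0) := by
      simpa using tendsto_pow_const_mul_const_pow_of_lt_one 1 (by norm_num : (0:ℝ) ≤ 1/2)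
        (by norm_num)
    have heq : (fun l : ℕ => (2 * C * ((l : ℝ) + 1) + 1) * (1 / 2) ^ l)
        = fun l : ℕ => 2 * C * ((l : ℝ) * (1 / 2) ^ l) + (2 * C + 1) * ((1 / 2) ^ l) :=
      funext fun l => by ring
    rw [heq]
    have := (hlp.const_mul (2 * C)).add (hp.const_mul (2 * C + 1))
    simpa using this
  · intro m l hml p hpleg hge a ha
    have hflatadm : Adml Mf l (flat p) := by
      constructor
      · refine flat_strictMono (fun j => ((hpleg.1 j).1).monotone) hpleg.2.1 hpleg.2.2
      · intro r
        exact ⟨(hpleg.1 _).2 _, hge _ _⟩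
    have hphieq : phiF x m a (flat p) = ‖∑ j, a j • x (p j)‖ := by
      unfold phiF
      congr 1
      refine Finset.sum_congr rfl fun j _ => ?_
      rw [pleg_flat]
    have hha : ∀ j, |a j| ≤ 1 := fun j => abs_le.mpr ⟨(ha j).1, (ha j).2⟩
    have := hgen m l hml (flat p) hflatadm a hha
    rw [hphieq] at this
    exact this
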